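/- Let Q and T be strings. The maximum coverage over all weak chains of MEMs between Q and T is at most the length of the LCS of Q and T, and by Theorem (anchor-restricted LCS = LCS for MEM anchors) it equals the LCS length. Formally: max over weak chains A' of MEMs of coverage(A') = |LCS(Q,T)|. -/

import Mathlib

variable {α : Type*}

/-- `(x, i, κ)` is an exact match between strings `Q` and `T` (0-indexed):
`Q[x..x+κ-1] = T[i..i+κ-1]`. -/
def IsExactMatch (Q T : List α) (x i κ : ℕ) : Prop :=
  1 ≤ κ ∧ x + κ ≤ Q.length ∧ i + κ ≤ T.length ∧
    ∀ d < κ, Q[x + d]? = T[i + d]?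

/-- `(x, i, κ)` is a maximal exact match (MEM): an exact match that cannot be
extended to the left nor to the right. -/
def IsMEM (Q T : List α) (x i κ : ℕ) : Prop :=
  IsExactMatch Q T x i κ ∧
    (x = 0 ∨ i = 0 ∨ Q[x - 1]? ≠ T[i - 1]?) ∧
    (x + κ = Q.length ∨ i + κ = T.length ∨ Q[x + κ]? ≠ T[i + κ]?)

/-- Anchor `(x, i, κ)` supports the character match `(y, j)` at the same offset. -/
def Supports (x i κ y j : ℕ) : Prop :=
  x ≤ y ∧ y < x + κ ∧ i ≤ j ∧ j < i + κ ∧ y - x = j - i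

/-- `ys, js` exhibit a common subsequence of `Q` and `T` of length `c`. -/
def IsCommonSubseq (Q T : List α) (c : ℕ) (ys js : Fin c → ℕ) : Prop :=
  StrictMono ys ∧ StrictMono js ∧
    ∀ l, ys l < Q.length ∧ js l < T.length ∧ Q[ys l]? = T[js l]?

/-- There is a common subsequence of length `c` each of whose character matches is
supported by some anchor of `A` at the same offset. -/
def IsRestrictedCS (A : Set (ℕ × ℕ × ℕ)) (Q T : List α) (c : ℕ) : Prop :=
  ∃ ys js : Fin c → ℕ, IsCommonSubseq Q T c ys js ∧
    ∀ l, ∃ m ∈ A, Supports m.1 m.2.1 m.2.2 (ys l) (js l)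

/-- The coverage contribution of anchor `l` in a chain `f` of `N'` anchors:
`min(min(i_{l+1}, i_l + κ_l) - i_l, min(x_{l+1}, x_l + κ_l) - x_l)`, where the
sentinel anchor `(∞, ∞, 0)` is appended (so the last term is `κ_{N'}`). -/
def covTerm (N' : ℕ) (f : Fin N' → ℕ × ℕ × ℕ) (l : Fin N') : ℕ :=
  let x := (f l).1
  let i := (f l).2.1
  let κ := (f l).2.2
  let nx := if h : (l : ℕ) + 1 < N' then (f ⟨l + 1, h⟩).1 else x + κ
  let ni := if h : (l : ℕ) + 1 < N' then (f ⟨l + 1, h⟩).2.1 else i + κ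
  min (min ni (i + κ) - i) (min nx (x + κ) - x)

/-- The coverage of a chain of anchors. -/
def chainCoverage (N' : ℕ) (f : Fin N' → ℕ × ℕ × ℕ) : ℕ :=
  ∑ l : Fin N', covTerm N' f l

/-- A weak chain: anchor coordinates strictly increase in both strings. -/
def IsWeakChain (N' : ℕ) (f : Fin N' → ℕ × ℕ × ℕ) : Prop :=
  (StrictMono fun l => (f l).1) ∧ (StrictMono fun l => (f l).2.1)

namespace MemAux

def nxt1 (X : ℕ) (a : ℕ × ℕ × ℕ) (r : List (ℕ × ℕ × ℕ)) : ℕ :=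
  (r.head?.map (·.1)).getD (min X (a.1 + a.2.2))

def nxt2 (I : ℕ) (a : ℕ × ℕ × ℕ) (r : List (ℕ × ℕ × ℕ)) : ℕ :=
  (r.head?.map (·.2.1)).getD (min I (a.2.1 + a.2.2))

def term (X I : ℕ) (a : ℕ × ℕ × ℕ) (r : List (ℕ × ℕ × ℕ)) : ℕ :=
  min (min (nxt2 I a r) (a.2.1 + a.2.2) - a.2.1) (min (nxt1 X a r) (a.1 + a.2.2) - a.1)

def truncCov (X I : ℕ) : List (ℕ × ℕ × ℕ) → ℕ
  | [] => 0
  | a :: r => term X I a r + truncCov X I r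

lemma covTerm_def (N' : ℕ) (f : Fin N' → ℕ × ℕ × ℕ) (l : Fin N') :
    covTerm N' f l =
      min (min (if h : (l : ℕ) + 1 < N' then (f ⟨l + 1, h⟩).2.1 else (f l).2.1 + (f l).2.2)
            ((f l).2.1 + (f l).2.2) - (f l).2.1)
        (min (if h : (l : ℕ) + 1 < N' then (f ⟨l + 1, h⟩).1 else (f l).1 + (f l).2.2)
            ((f l).1 + (f l).2.2) - (f l).1) := rfl

lemma covTerm_succ (N' : ℕ) (f : Fin (N' + 1) → ℕ × ℕ × ℕ) (l : Fin N') :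
    covTerm (N' + 1) f l.succ = covTerm N' (fun k => f k.succ) l := by
  rw [covTerm_def, covTerm_def]
  simp only [Fin.val_succ]
  by_cases h : (l : ℕ) + 1 < N'
  · rw [dif_pos (by omega : (l:ℕ) + 1 + 1 < N' + 1), dif_pos (by omega : (l:ℕ) + 1 + 1 < N' + 1),
      dif_pos h, dif_pos h]
    rfl
  · rw [dif_neg (by omega : ¬((l:ℕ) + 1 + 1 < N' + 1)), dif_neg (by omega : ¬((l:ℕ) + 1 + 1 < N' + 1)),
      dif_neg h, dif_neg h]

lemma bridge (X I : ℕ) : ∀ (N' : ℕ) (f : Fin N' → ℕ × ℕ × ℕ),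
    (∀ l, (f l).1 + (f l).2.2 ≤ X ∧ (f l).2.1 + (f l).2.2 ≤ I) →
    chainCoverage N' f = truncCov X I (List.ofFn f)
  | 0, f, _ => by simp [chainCoverage, truncCov]
  | (N' + 1), f, hb => by
    rw [List.ofFn_succ, truncCov, chainCoverage, Fin.sum_univ_succ]
    have hrec : (∑ l : Fin N', covTerm (N'+1) f l.succ) = chainCoverage N' (fun k => f k.succ) := by
      unfold chainCoverage
      exact Finset.sum_congr rfl fun l _ => covTerm_succ N' f l
    rw [hrec, bridge X I N' (fun k => f k.succ) (fun l => hb l.succ)]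
    congr 1
    rw [covTerm_def]
    unfold term nxt1 nxt2
    cases N' with
    | zero =>
      rw [dif_neg (by simp : ¬ ((0:Fin 1):ℕ) + 1 < 1), dif_neg (by simp : ¬ ((0:Fin 1):ℕ) + 1 < 1)]
      have := hb 0
      simp only [List.ofFn_zero, List.head?_nil, Option.map_none, Option.getD_none]
      omega
    | succ m =>
      rw [dif_pos (by simp : ((0:Fin (m+2)):ℕ) + 1 < m + 2), dif_pos (by simp : ((0:Fin (m+2)):ℕ) + 1 < m + 2)]
      rw [List.ofFn_succ]
      simp only [List.head?_cons, Option.map_some, Option.getD_some]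
      rfl


/-- chain relation on anchors -/
def R3 (a b : ℕ × ℕ × ℕ) : Prop := a.1 < b.1 ∧ a.2.1 < b.2.1

/-- match relation on cells -/
def R2 (p q : ℕ × ℕ) : Prop := p.1 < q.1 ∧ p.2 < q.2

def cells (X I : ℕ) : List (ℕ × ℕ × ℕ) → List (ℕ × ℕ)
  | [] => []
  | a :: r => (List.range (term X I a r)).map (fun d => (a.1 + d, a.2.1 + d)) ++ cells X I r

lemma cells_length (X I : ℕ) (C : List (ℕ × ℕ × ℕ)) :
    (cells X I C).length = truncCov X I C := by
  induction C with
  | nil => rfl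
  | cons a r ih => simp [cells, truncCov, ih]

lemma cells_lb (X I u v : ℕ) (C : List (ℕ × ℕ × ℕ))
    (h : ∀ b ∈ C, u ≤ b.1 ∧ v ≤ b.2.1) :
    ∀ p ∈ cells X I C, u ≤ p.1 ∧ v ≤ p.2 := by
  induction C with
  | nil => simp [cells]
  | cons a r ih =>
    intro p hp
    rw [cells, List.mem_append] at hp
    rcases hp with hp | hp
    · obtain ⟨d, _, rfl⟩ := List.mem_map.1 hp
      have := h a (List.mem_cons_self)
      constructor <;> simp <;> omega
    · exact ih (fun b hb => h b (List.mem_cons_of_mem _ hb)) p hp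

lemma term_le_x (X I : ℕ) (a : ℕ × ℕ × ℕ) (r : List (ℕ × ℕ × ℕ)) :
    term X I a r ≤ min (nxt1 X a r) (a.1 + a.2.2) - a.1 := min_le_right _ _

lemma term_le_i (X I : ℕ) (a : ℕ × ℕ × ℕ) (r : List (ℕ × ℕ × ℕ)) :
    term X I a r ≤ min (nxt2 I a r) (a.2.1 + a.2.2) - a.2.1 := min_le_left _ _

lemma cells_spec (Q T : List α) (X I : ℕ) (C : List (ℕ × ℕ × ℕ))
    (hC : ∀ a ∈ C, IsMEM Q T a.1 a.2.1 a.2.2) (hp : C.Pairwise R3) :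
    (cells X I C).Pairwise R2 ∧
      ∀ p ∈ cells X I C, p.1 < Q.length ∧ p.2 < T.length ∧ Q[p.1]? = T[p.2]? := by
  induction C with
  | nil => simp [cells]
  | cons a r ih =>
    obtain ⟨ihp, ihm⟩ := ih (fun b hb => hC b (List.mem_cons_of_mem _ hb)) hp.of_cons
    have hmema : IsMEM Q T a.1 a.2.1 a.2.2 := hC a (List.mem_cons_self)
    obtain ⟨⟨hκ, hxQ, hiT, hmatch⟩, _, _⟩ := hmema
    have htermx : ∀ d < term X I a r, a.1 + d < min (nxt1 X a r) (a.1 + a.2.2) := by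
      intro d hd
      have := term_le_x X I a r
      omega
    have htermi : ∀ d < term X I a r, a.2.1 + d < min (nxt2 I a r) (a.2.1 + a.2.2) := by
      intro d hd
      have := term_le_i X I a r
      omega
    constructor
    · rw [cells, List.pairwise_append]
      refine ⟨?_, ihp, ?_⟩
      · rw [List.pairwise_map]
        exact List.pairwise_lt_range.imp (fun h => ⟨by omega, by omega⟩)
      · intro p hpmem q hqmem
        obtain ⟨d, hd, rfl⟩ := List.mem_map.1 hpmem
        rw [List.mem_range] at hd
        cases r with
        | nil => exact absurd hqmem (by simp [cells])
        | cons b r' =>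
          have hnx : nxt1 X a (b :: r') = b.1 := rfl
          have hni : nxt2 I a (b :: r') = b.2.1 := rfl
          have hlb : ∀ p ∈ cells X I (b :: r'), b.1 ≤ p.1 ∧ b.2.1 ≤ p.2 := by
            apply cells_lb
            intro c hc
            rcases List.mem_cons.1 hc with rfl | hc
            · exact ⟨le_refl _, le_refl _⟩
            · have := List.rel_of_pairwise_cons hp.of_cons hc
              exact ⟨le_of_lt this.1, le_of_lt this.2⟩
          have h1 := htermx d hd
          have h2 := htermi d hd
          have h3 := hlb q hqmem
          rw [hnx] at h1; rw [hni] at h2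
          exact ⟨by omega, by omega⟩
    · intro p hpmem
      rw [cells, List.mem_append] at hpmem
      rcases hpmem with hpmem | hpmem
      · obtain ⟨d, hd, rfl⟩ := List.mem_map.1 hpmem
        rw [List.mem_range] at hd
        have h1 := htermx d hd
        have h2 := htermi d hd
        have hdκ : d < a.2.2 := by omega
        refine ⟨by omega, by omega, hmatch d hdκ⟩
      · exact ihm p hpmem

lemma length_le_of_pairwise_lt :
    ∀ (l : List ℕ), l.Pairwise (· < ·) → ∀ a b, (∀ v ∈ l, a ≤ v ∧ v < b) → l.length ≤ b - a := by
  intro l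
  induction l with
  | nil => intro _ a b _; simp
  | cons v r ih =>
    intro hp a b hv
    have h1 := hv v (List.mem_cons_self)
    have h2 : ∀ w ∈ r, v + 1 ≤ w ∧ w < b := by
      intro w hw
      exact ⟨List.rel_of_pairwise_cons hp hw, (hv w (List.mem_cons_of_mem _ hw)).2⟩
    have := ih hp.of_cons (v + 1) b h2
    simp only [List.length_cons]
    omega

lemma strictMono_fin_le {n : ℕ} {g : Fin n → ℕ} (hg : StrictMono g) (k : Fin n) :
    (k : ℕ) ≤ g k := by
  have H : ∀ m (h : m < n), m ≤ g ⟨m, h⟩ := by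
    intro m
    induction m with
    | zero => simp
    | succ m ihm =>
      intro h
      have h' : m < n := by omega
      have := ihm h'
      have hlt : g ⟨m, h'⟩ < g ⟨m + 1, h⟩ := hg (by simp [Fin.lt_def])
      omega
  simpa using H k.1 k.2


open Classical in
lemma exists_MEM (Q T : List α) {y j : ℕ} (hy : y < Q.length) (hj : j < T.length)
    (hq : Q[y]? = T[j]?) :
    ∃ x i κ, IsMEM Q T x i κ ∧ x ≤ y ∧ y < x + κ ∧ i ≤ j ∧ j < i + κ ∧ y - x = j - i := by
  classical
  set Pa : ℕ → Prop := fun a => ∀ d ≤ a, Q[y - d]? = T[j - d]? with hPa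
  set Pb : ℕ → Prop := fun b => y + b < Q.length ∧ j + b < T.length ∧
      ∀ d ≤ b, Q[y + d]? = T[j + d]? with hPb
  have hPa0 : Pa 0 := by
    intro d hd
    interval_cases d
    simpa using hq
  have hPb0 : Pb 0 := by
    refine ⟨by omega, by omega, ?_⟩
    intro d hd
    interval_cases d
    simpa using hq
  set a := Nat.findGreatest Pa (min y j) with ha
  set b := Nat.findGreatest Pb Q.length with hb
  have haP : Pa a := Nat.findGreatest_spec (Nat.zero_le _) hPa0
  have hbP : Pb b := Nat.findGreatest_spec (Nat.zero_le _) hPb0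
  have hale : a ≤ min y j := Nat.findGreatest_le _
  obtain ⟨hbQ, hbT, hbm⟩ := hbP
  refine ⟨y - a, j - a, a + b + 1, ⟨⟨by omega, by omega, by omega, ?_⟩, ?_, ?_⟩,
    by omega, by omega, by omega, by omega, by omega⟩
  · -- exact match
    intro d hd
    rcases le_or_gt d a with hda | hda
    · have h1 : y - a + d = y - (a - d) := by omega
      have h2 : j - a + d = j - (a - d) := by omega
      rw [h1, h2]
      exact haP (a - d) (by omega)
    · have h1 : y - a + d = y + (d - a) := by omega
      have h2 : j - a + d = j + (d - a) := by omega
      rw [h1, h2]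
      exact hbm (d - a) (by omega)
  · -- left maximal
    by_contra hcon
    push_neg at hcon
    obtain ⟨hx0, hi0, heq⟩ := hcon
    have ha1 : a + 1 ≤ min y j := by omega
    have hnot : ¬ Pa (a + 1) := Nat.findGreatest_is_greatest (by omega) ha1
    apply hnot
    intro d hd
    rcases Nat.lt_or_ge d (a + 1) with hd' | hd'
    · exact haP d (by omega)
    · have hda : d = a + 1 := by omega
      subst hda
      have h1 : y - (a + 1) = y - a - 1 := by omega
      have h2 : j - (a + 1) = j - a - 1 := by omega
      rw [h1, h2]
      exact heq
  · -- right maximal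
    have hxκ : y - a + (a + b + 1) = y + b + 1 := by omega
    have hiκ : j - a + (a + b + 1) = j + b + 1 := by omega
    rw [hxκ, hiκ]
    by_contra hcon
    push_neg at hcon
    obtain ⟨hx0, hi0, heq⟩ := hcon
    have hb1 : b + 1 ≤ Q.length := by omega
    have hnot : ¬ Pb (b + 1) := Nat.findGreatest_is_greatest (by omega) hb1
    apply hnot
    refine ⟨by omega, by omega, ?_⟩
    intro d hd
    rcases Nat.lt_or_ge d (b + 1) with hd' | hd'
    · exact hbm d (by omega)
    · have hdb : d = b + 1 := by omega
      subst hdb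
      exact heq


lemma truncCov_append_singleton (X I : ℕ) (M : ℕ × ℕ × ℕ) :
    ∀ C, truncCov X I (C ++ [M]) = truncCov M.1 M.2.1 C + term X I M []
  | [] => by simp [truncCov]
  | a :: r => by
    rw [List.cons_append, truncCov, truncCov, truncCov_append_singleton X I M r]
    have h : term X I a (r ++ [M]) = term M.1 M.2.1 a r := by
      cases r with
      | nil =>
        unfold term nxt1 nxt2
        simp [min_assoc]
      | cons b r' => rfl
    omega

lemma le_getLast_of_pairwise :
    ∀ (l : List (ℕ × ℕ)), l.Pairwise R2 → ∀ (hne : l ≠ []),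
      ∀ r ∈ l, r.1 ≤ (l.getLast hne).1 ∧ r.2 ≤ (l.getLast hne).2 := by
  intro l
  induction l with
  | nil => intro _ hne; exact absurd rfl hne
  | cons a t ih =>
    intro hp hne r hr
    cases t with
    | nil =>
      simp only [List.mem_singleton] at hr
      subst hr
      simp [List.getLast]
    | cons b t' =>
      rw [List.getLast_cons (by simp : (b :: t') ≠ [])]
      rcases List.mem_cons.1 hr with rfl | hr
      · have hlast := List.getLast_mem (by simp : (b :: t') ≠ [])
        have := List.rel_of_pairwise_cons hp hlast
        exact ⟨le_of_lt this.1, le_of_lt this.2⟩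
      · exact ih hp.of_cons (by simp) r hr

lemma exists_split (pred : ℕ × ℕ → Bool) (L : List (ℕ × ℕ)) (hL : ∃ p ∈ L, pred p = false) :
    ∃ L1 q L2t, L = L1 ++ q :: L2t ∧ (∀ r ∈ L1, pred r = true) ∧ pred q = false := by
  induction L with
  | nil => simp at hL
  | cons a t ih =>
    cases hpa : pred a with
    | false => exact ⟨[], a, t, by simp, by simp, hpa⟩
    | true =>
      have ht : ∃ p ∈ t, pred p = false := by
        obtain ⟨p, hp, hpf⟩ := hL
        rcases List.mem_cons.1 hp with rfl | hp
        · rw [hpa] at hpf; simp at hpf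
        · exact ⟨p, hp, hpf⟩
      obtain ⟨L1, q, L2t, h1, h2, h3⟩ := ih ht
      refine ⟨a :: L1, q, L2t, by rw [h1]; rfl, ?_, h3⟩
      intro r hr
      rcases List.mem_cons.1 hr with rfl | hr
      · exact hpa
      · exact h2 r hr

lemma claimB (Q T : List α) : ∀ (n : ℕ) (L : List (ℕ × ℕ)), L.length ≤ n →
    L.Pairwise R2 →
    (∀ p ∈ L, p.1 < Q.length ∧ p.2 < T.length ∧ Q[p.1]? = T[p.2]?) →
    ∀ X I, (∀ p ∈ L, p.1 < X ∧ p.2 < I) →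
    ∃ C : List (ℕ × ℕ × ℕ), (∀ a ∈ C, IsMEM Q T a.1 a.2.1 a.2.2) ∧
      C.Pairwise R3 ∧ (∀ a ∈ C, a.1 < X ∧ a.2.1 < I) ∧ L.length ≤ truncCov X I C := by
  intro n
  induction n with
  | zero =>
    intro L hlen _ _ X I _
    exact ⟨[], by simp, by simp, by simp, hlen⟩
  | succ n ih =>
    intro L hlen hpair hmatch X I hXI
    rcases eq_or_ne L [] with rfl | hne
    · exact ⟨[], by simp, by simp, by simp, by simp [truncCov]⟩
    · obtain ⟨p, hpL, hplast⟩ : ∃ p ∈ L, ∀ r ∈ L, r.1 ≤ p.1 ∧ r.2 ≤ p.2 :=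
        ⟨L.getLast hne, List.getLast_mem hne, le_getLast_of_pairwise L hpair hne⟩
      obtain ⟨hpQ, hpT, hpq⟩ := hmatch p hpL
      obtain ⟨hpX, hpI⟩ := hXI p hpL
      obtain ⟨x, i, κ, hM, hxy, hyxκ, hij, hjiκ, hdiag⟩ := exists_MEM Q T hpQ hpT hpq
      obtain ⟨L1, q, L2t, hsplit, hL1pred, hqpred⟩ :=
        exists_split (fun r => decide (r.1 < x ∧ r.2 < i)) L
          ⟨p, hpL, by simp; omega⟩
      subst hsplit
      have hqnot : ¬ (q.1 < x ∧ q.2 < i) := by simpa using hqpred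
      rw [List.pairwise_append] at hpair
      obtain ⟨hpairL1, hpairL2, hcross⟩ := hpair
      have hL2le : ∀ r ∈ q :: L2t, r.1 ≤ p.1 ∧ r.2 ≤ p.2 := fun r hr =>
        hplast r (List.mem_append_right _ hr)
      -- counting
      have hterm : (q :: L2t).length ≤ term X I (x, i, κ) [] := by
        have htv : term X I (x, i, κ) [] =
            min (min (min I (i + κ)) (i + κ) - i) (min (min X (x + κ)) (x + κ) - x) := rfl
        have hm1 : min (min X (x + κ)) (x + κ) = min X (x + κ) := by rw [min_assoc, min_self]
        have hm2 : min (min I (i + κ)) (i + κ) = min I (i + κ) := by rw [min_assoc, min_self]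
        rw [hm1, hm2] at htv
        have hcount : (q :: L2t).length ≤ min (p.1 + 1 - x) (p.2 + 1 - i) := by
          rcases Nat.lt_or_ge q.1 x with hqx | hqx
          · -- case B : i ≤ q.2, count second coordinates
            have hqi : i ≤ q.2 := by omega
            have hpw : ((q :: L2t).map Prod.snd).Pairwise (· < ·) :=
              hpairL2.map Prod.snd (fun a b h => h.2)
            have hbnd : ∀ v ∈ (q :: L2t).map Prod.snd, i ≤ v ∧ v < p.2 + 1 := by
              intro v hv
              obtain ⟨r, hrmem, rfl⟩ := List.mem_map.1 hv
              have h1 := hL2le r hrmem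
              have h2 : i ≤ r.2 := by
                rcases List.mem_cons.1 hrmem with rfl | hr
                · exact hqi
                · have := List.rel_of_pairwise_cons hpairL2 hr
                  have := this.2
                  omega
              exact ⟨h2, by omega⟩
            have := length_le_of_pairwise_lt _ hpw i (p.2 + 1) hbnd
            simp only [List.length_map] at this
            have hle : p.2 + 1 - i ≤ p.1 + 1 - x ∨ p.1 + 1 - x ≤ p.2 + 1 - i := by omega
            omega
          · -- case A : x ≤ q.1, count first coordinates
            have hpw : ((q :: L2t).map Prod.fst).Pairwise (· < ·) :=
              hpairL2.map Prod.fst (fun a b h => h.1)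
            have hbnd : ∀ v ∈ (q :: L2t).map Prod.fst, x ≤ v ∧ v < p.1 + 1 := by
              intro v hv
              obtain ⟨r, hrmem, rfl⟩ := List.mem_map.1 hv
              have h1 := hL2le r hrmem
              have h2 : x ≤ r.1 := by
                rcases List.mem_cons.1 hrmem with rfl | hr
                · exact hqx
                · have := List.rel_of_pairwise_cons hpairL2 hr
                  have := this.1
                  omega
              exact ⟨h2, by omega⟩
            have := length_le_of_pairwise_lt _ hpw x (p.1 + 1) hbnd
            simp only [List.length_map] at this
            omega
        rw [htv]
        omega
      -- induction hypothesis on L1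
      have hL1len : L1.length ≤ n := by
        have := (List.length_append : (L1 ++ q :: L2t).length = _)
        simp only [List.length_cons] at this ⊢
        omega
      obtain ⟨C1, hC1mem, hC1pair, hC1bnd, hC1cov⟩ :=
        ih L1 hL1len hpairL1
          (fun r hr => hmatch r (List.mem_append_left _ hr)) x i
          (fun r hr => by simpa using hL1pred r hr)
      refine ⟨C1 ++ [(x, i, κ)], ?_, ?_, ?_, ?_⟩
      · intro a ha
        rcases List.mem_append.1 ha with ha | ha
        · exact hC1mem a ha
        · simp only [List.mem_singleton] at ha
          subst ha
          exact hM
      · rw [List.pairwise_append]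
        refine ⟨hC1pair, by simp, ?_⟩
        intro a ha b hb
        simp only [List.mem_singleton] at hb
        subst hb
        exact ⟨(hC1bnd a ha).1, (hC1bnd a ha).2⟩
      · intro a ha
        rcases List.mem_append.1 ha with ha | ha
        · have := hC1bnd a ha
          exact ⟨by omega, by omega⟩
        · simp only [List.mem_singleton] at ha
          subst ha
          exact ⟨lt_of_le_of_lt hxy hpX, lt_of_le_of_lt hij hpI⟩
      · rw [truncCov_append_singleton]
        have hcov : truncCov (x, i, κ).1 (x, i, κ).2.1 C1 = truncCov x i C1 := rfl
        rw [hcov]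
        have hlen2 : (L1 ++ q :: L2t).length = L1.length + (q :: L2t).length :=
          List.length_append
        omega
end MemAux

/-- The maximum coverage over all weak chains of MEMs between `Q` and `T` equals
the length of a longest common subsequence of `Q` and `T`. -/
theorem max_coverage_weak_chains_eq_LCS (Q T : List α) :
    sSup {c | ∃ (N' : ℕ) (f : Fin N' → ℕ × ℕ × ℕ),
        (∀ l, IsMEM Q T (f l).1 (f l).2.1 (f l).2.2) ∧ IsWeakChain N' f ∧
        chainCoverage N' f = c} =
      sSup {c | ∃ ys js : Fin c → ℕ, IsCommonSubseq Q T c ys js} := by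

  set S1 := {c | ∃ (N' : ℕ) (f : Fin N' → ℕ × ℕ × ℕ),
      (∀ l, IsMEM Q T (f l).1 (f l).2.1 (f l).2.2) ∧ IsWeakChain N' f ∧
      chainCoverage N' f = c} with hS1
  set S2 := {c | ∃ ys js : Fin c → ℕ, IsCommonSubseq Q T c ys js} with hS2
  have h0S1 : (0 : ℕ) ∈ S1 := by
    refine ⟨0, Fin.elim0, fun l => l.elim0, ⟨fun a => a.elim0, fun a => a.elim0⟩, ?_⟩
    simp [chainCoverage]
  -- S1 ⊆ S2
  have hsub : S1 ⊆ S2 := by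
    rintro c ⟨N', f, hmem, hweak, hcov⟩
    have hCmem : ∀ a ∈ List.ofFn f, IsMEM Q T a.1 a.2.1 a.2.2 := by
      intro a ha
      rw [List.mem_ofFn] at ha
      obtain ⟨l, rfl⟩ := ha
      exact hmem l
    have hCpair : (List.ofFn f).Pairwise MemAux.R3 :=
      List.pairwise_ofFn.2 (fun a b h => ⟨hweak.1 h, hweak.2 h⟩)
    have hbridge : chainCoverage N' f = MemAux.truncCov Q.length T.length (List.ofFn f) :=
      MemAux.bridge _ _ _ _ (fun l => ⟨(hmem l).1.2.1, (hmem l).1.2.2.1⟩)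
    obtain ⟨hclpair, hclmatch⟩ := MemAux.cells_spec Q T Q.length T.length (List.ofFn f) hCmem hCpair
    have hlen : (MemAux.cells Q.length T.length (List.ofFn f)).length = c := by
      rw [MemAux.cells_length, ← hbridge, hcov]
    refine ⟨fun l => ((MemAux.cells Q.length T.length (List.ofFn f)).get (Fin.cast hlen.symm l)).1,
      fun l => ((MemAux.cells Q.length T.length (List.ofFn f)).get (Fin.cast hlen.symm l)).2,
      ?_, ?_, ?_⟩
    · intro a b hab
      refine (List.pairwise_iff_get.1 hclpair _ _ ?_).1
      rw [Fin.lt_def, Fin.coe_cast, Fin.coe_cast]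
      exact hab
    · intro a b hab
      refine (List.pairwise_iff_get.1 hclpair _ _ ?_).2
      rw [Fin.lt_def, Fin.coe_cast, Fin.coe_cast]
      exact hab
    · intro l
      exact hclmatch _ (List.get_mem _ _)
  -- every element of S2 is dominated by an element of S1
  have hdom : ∀ c ∈ S2, ∃ c' ∈ S1, c ≤ c' := by
    rintro c ⟨ys, js, hm1, hm2, hprop⟩
    set L := List.ofFn (fun l : Fin c => (ys l, js l)) with hL
    have hLpair : L.Pairwise MemAux.R2 :=
      List.pairwise_ofFn.2 (fun a b h => ⟨hm1 h, hm2 h⟩)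
    have hLmatch : ∀ p ∈ L, p.1 < Q.length ∧ p.2 < T.length ∧ Q[p.1]? = T[p.2]? := by
      intro p hp
      rw [hL, List.mem_ofFn] at hp
      obtain ⟨l, rfl⟩ := hp
      exact hprop l
    have hXI : ∀ p ∈ L, p.1 < Q.length ∧ p.2 < T.length :=
      fun p hp => ⟨(hLmatch p hp).1, (hLmatch p hp).2.1⟩
    obtain ⟨C, hCmem, hCpair, _, hCcov⟩ :=
      MemAux.claimB Q T L.length L le_rfl hLpair hLmatch Q.length T.length hXI
    refine ⟨chainCoverage C.length C.get, ⟨C.length, C.get, ?_, ?_, rfl⟩, ?_⟩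
    · intro l
      exact hCmem _ (List.get_mem _ _)
    · constructor
      · intro a b hab
        exact (List.pairwise_iff_get.1 hCpair _ _ hab).1
      · intro a b hab
        exact (List.pairwise_iff_get.1 hCpair _ _ hab).2
    · have hbr : chainCoverage C.length C.get = MemAux.truncCov Q.length T.length (List.ofFn C.get) :=
        MemAux.bridge _ _ _ _ (fun l => ⟨(hCmem _ (List.get_mem _ _)).1.2.1,
          (hCmem _ (List.get_mem _ _)).1.2.2.1⟩)
      rw [hbr, List.ofFn_get]
      have : L.length = c := by rw [hL, List.length_ofFn]
      omega
  have hbdd2 : ∀ c ∈ S2, c ≤ Q.length := by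
    rintro c ⟨ys, js, h1, h2, h3⟩
    cases c with
    | zero => exact Nat.zero_le _
    | succ m =>
      have ha := MemAux.strictMono_fin_le h1 ⟨m, by omega⟩
      have hb := (h3 ⟨m, by omega⟩).1
      simp at ha
      omega
  have hBdd2 : BddAbove S2 := ⟨Q.length, hbdd2⟩
  have hBdd1 : BddAbove S1 := hBdd2.mono hsub
  apply le_antisymm
  · exact csSup_le_csSup hBdd2 ⟨0, h0S1⟩ hsub
  · refine csSup_le ⟨0, hsub h0S1⟩ ?_
    intro c hc
    obtain ⟨c', hc', hle⟩ := hdom c hc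
    exact le_trans hle (le_csSup hBdd1 hc')
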